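/- Fix α ∈ ℝ and set ᾱ = max{0,α}. There is a constant c > 0 (depending on α) such that for all m ≥ 1, ∫_m^∞ ∫_0^∞ Ai(y+λ+ᾱ)² e^{2(1+α)λ} dλ dy ≤ c·e^{−(4/3)m^{3/2}}. -/

import Mathlib

open MeasureTheory
open Real Set Filter

/-- `Ai` is the Airy function: the solution of `Ai″(x) = x·Ai(x)` decaying at `+∞`,
normalized by `Ai(0) = 3^{−2/3}/Γ(2/3)`. -/
def IsAiryFn (Ai : ℝ → ℝ) : Prop :=
  ContDiff ℝ ⊤ Ai ∧ (∀ x, deriv (deriv Ai) x = x * Ai x) ∧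
    Filter.Tendsto Ai Filter.atTop (nhds 0) ∧
    Ai 0 = (3 : ℝ) ^ (-(2 : ℝ) / 3) / Real.Gamma (2 / 3)

section AiryAuxiliary


lemma rpow32 {l : ℝ} (hl : 0 ≤ l) : l ^ ((3:ℝ)/2) = l * Real.sqrt l := by
  rcases hl.eq_or_lt with h|h
  · rw [← h, Real.zero_rpow (by norm_num), Real.sqrt_zero, mul_zero]
  · rw [Real.sqrt_eq_rpow, show (3:ℝ)/2 = 1 + 1/2 by norm_num, Real.rpow_add h,
      Real.rpow_one]

lemma superadd {a b : ℝ} (ha : 0 ≤ a) (hb : 0 ≤ b) :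
    a ^ ((3:ℝ)/2) + b ^ ((3:ℝ)/2) ≤ (a+b) ^ ((3:ℝ)/2) := by
  rw [rpow32 ha, rpow32 hb, rpow32 (by linarith)]
  have h1 : Real.sqrt a ≤ Real.sqrt (a+b) := Real.sqrt_le_sqrt (by linarith)
  have h2 : Real.sqrt b ≤ Real.sqrt (a+b) := Real.sqrt_le_sqrt (by linarith)
  nlinarith [Real.sqrt_nonneg a, Real.sqrt_nonneg b]

lemma lin_lower {m y : ℝ} (hm : 1 ≤ m) (hy : m ≤ y) :
    (3/2) * (y - m) ≤ y ^ ((3:ℝ)/2) - m ^ ((3:ℝ)/2) := by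
  have h0m : (0:ℝ) ≤ m := by linarith
  have h0y : (0:ℝ) ≤ y := by linarith
  rw [rpow32 h0m, rpow32 h0y]
  have hu : 1 ≤ Real.sqrt m := by
    rw [show (1:ℝ) = Real.sqrt 1 by simp]; exact Real.sqrt_le_sqrt hm
  have huv : Real.sqrt m ≤ Real.sqrt y := Real.sqrt_le_sqrt hy
  have h1 : Real.sqrt m ^ 2 = m := Real.sq_sqrt h0m
  have h2 : Real.sqrt y ^ 2 = y := Real.sq_sqrt h0y
  have hv1 : 1 ≤ Real.sqrt y := hu.trans huv
  have f2 : 0 ≤ Real.sqrt y * Real.sqrt y + Real.sqrt m * Real.sqrt y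
      + Real.sqrt m * Real.sqrt m - (3/2) * (Real.sqrt y + Real.sqrt m) := by nlinarith
  nlinarith [mul_nonneg (sub_nonneg.2 huv) f2]

lemma exp_dom (a : ℝ) : ∃ c₀ ≥ 0, ∀ l : ℝ, 0 ≤ l → (a+1) * l ≤ (4/3) * l ^ ((3:ℝ)/2) + c₀ := by
  set b := max (a+1) 0 with hb
  have hb0 : 0 ≤ b := le_max_right _ _
  have hab : a + 1 ≤ b := le_max_left _ _
  refine ⟨b * (3*b/4)^2, by positivity, fun l hl => ?_⟩
  have key : b * l ≤ (4/3) * l ^ ((3:ℝ)/2) + b * (3*b/4)^2 := by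
    rcases le_total l ((3*b/4)^2) with h|h
    · have : b * l ≤ b * (3*b/4)^2 := mul_le_mul_of_nonneg_left h hb0
      have hr : 0 ≤ l ^ ((3:ℝ)/2) := Real.rpow_nonneg hl _
      linarith
    · have hs : 3*b/4 ≤ Real.sqrt l := by
        have := Real.sqrt_le_sqrt h
        rwa [Real.sqrt_sq (by positivity)] at this
      rw [rpow32 hl]
      nlinarith [Real.sqrt_nonneg l]
  nlinarith [mul_le_mul_of_nonneg_right hab hl]

lemma airy_decay (f : ℝ → ℝ) (hA : IsAiryFn f) :
    ∃ C > 0, ∀ s : ℝ, 1 ≤ s → f s ^ 2 ≤ C * Real.exp (-(4/3) * s ^ ((3:ℝ)/2)) := by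
  obtain ⟨hsm, hode, hlim, hval⟩ := hA
  have hsm2 : ContDiff ℝ (⊤:ℕ∞) f := hsm.of_le le_top
  have hsm' : ContDiff ℝ (⊤:ℕ∞) (deriv f) := (contDiff_infty_iff_deriv.mp hsm2).2
  have hdf : ∀ x, HasDerivAt f (deriv f x) x :=
    fun x => (hsm2.differentiable (by simp) x).hasDerivAt
  have hdf' : ∀ x, HasDerivAt (deriv f) (x * f x) x := fun x => by
    simpa [hode x] using (hsm'.differentiable (by simp) x).hasDerivAt
  have hcf : Continuous f := hsm.continuous
  have hcf' : Continuous (deriv f) := hsm'.continuous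
  -- V = f * f' is monotone on [0,∞)
  set V : ℝ → ℝ := fun x => f x * deriv f x with hV
  have hdV : ∀ x, HasDerivAt V (deriv f x * deriv f x + f x * (x * f x)) x :=
    fun x => (hdf x).mul (hdf' x)
  have hVmono : MonotoneOn V (Ici 0) := by
    apply monotoneOn_of_deriv_nonneg (convex_Ici 0)
      ((hcf.mul hcf').continuousOn)
      (fun x _ => ((hdV x).differentiableAt).differentiableWithinAt)
    intro x hx
    rw [interior_Ici] at hx
    rw [show (f * deriv f) = V from rfl, (hdV x).deriv]
    nlinarith [sq_nonneg (deriv f x), sq_nonneg (f x), le_of_lt hx.out,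
      mul_nonneg (le_of_lt hx.out) (sq_nonneg (f x))]
  -- f² tends to 0
  have hsqlim : Tendsto (fun x => f x ^ 2) atTop (nhds 0) := by
    have := hlim.mul hlim
    rw [mul_zero] at this
    simpa [pow_two] using this
  -- V ≤ 0 on [0,∞)
  have hVle : ∀ x, 0 ≤ x → V x ≤ 0 := by
    intro x₀ hx₀
    by_contra hpos
    push_neg at hpos
    set δ := V x₀ with hδ
    -- g = f² - 2δx is monotone on [x₀,∞)
    have hdg : ∀ x, HasDerivAt (fun x => f x ^ 2 - 2*δ*x) (2 * V x - 2*δ) x := by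
      intro x
      have h1 : HasDerivAt (fun x => f x ^ 2) (2 * f x ^ 1 * deriv f x) x := (hdf x).pow 2
      have h2 : HasDerivAt (fun x:ℝ => 2*δ*x) (2*δ) x := by
        simpa using (hasDerivAt_id x).const_mul (2*δ)
      have h3 := h1.sub h2
      refine h3.congr_deriv ?_
      push_cast
      try simp only [hV, pow_one]
      ring
    have hmono : MonotoneOn (fun x => f x ^ 2 - 2*δ*x) (Ici x₀) := by
      apply monotoneOn_of_deriv_nonneg (convex_Ici x₀)
        (((hcf.pow 2).sub (continuous_const.mul continuous_id')).continuousOn)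
        (fun x _ => ((hdg x).differentiableAt).differentiableWithinAt)
      intro x hx
      rw [interior_Ici] at hx
      rw [show (f ^ 2 - (fun x => 2 * δ) * fun x => x) = (fun x => f x ^ 2 - 2*δ*x) from rfl, (hdg x).deriv]
      have : δ ≤ V x := hVmono (mem_Ici.2 hx₀) (mem_Ici.2 (hx₀.trans hx.out.le)) hx.out.le
      linarith
    have hgrow : ∀ x, x₀ ≤ x → f x₀ ^ 2 + 2*δ*(x - x₀) ≤ f x ^ 2 := by
      intro x hx
      have := hmono (self_mem_Ici) (mem_Ici.2 hx) hx
      simp only at this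
      linarith
    have h1 : ∀ᶠ x in atTop, f x ^ 2 < 1 := by
      have := hsqlim (Iio_mem_nhds one_pos)
      filter_upwards [this] with x hx using hx
    have h2 : ∀ᶠ (x:ℝ) in atTop, x₀ + (1 + 1 / (2*δ)) ≤ x := eventually_ge_atTop _
    obtain ⟨x, hx1, hx2⟩ := (h1.and h2).exists
    have hinv : 0 < 1/(2*δ) := by positivity
    have hxx : x₀ ≤ x := by linarith
    have := hgrow x hxx
    have hδinv : 2*δ*(1/(2*δ)) = 1 := by field_simp
    nlinarith [sq_nonneg (f x₀)]
  -- f² is antitone on [0,∞)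
  have hsq_anti : AntitoneOn (fun x => f x ^ 2) (Ici 0) := by
    apply antitoneOn_of_deriv_nonpos (convex_Ici 0)
      ((hcf.pow 2).continuousOn)
      (fun x hx => (((hdf x).pow 2).differentiableAt).differentiableWithinAt)
    intro x hx
    rw [interior_Ici] at hx
    rw [((hdf x).pow 2).deriv]
    have := hVle x hx.out.le
    simp only [hV] at this
    push_cast
    nlinarith
  by_cases hzero : ∃ x₀, 0 ≤ x₀ ∧ f x₀ = 0
  · -- degenerate case: f vanishes from some point on
    obtain ⟨x₀, hx₀, hfx₀⟩ := hzero
    have hafter : ∀ s, x₀ ≤ s → f s = 0 := by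
      intro s hs
      have h1 : f s ^ 2 ≤ f x₀ ^ 2 := hsq_anti (mem_Ici.2 hx₀) (mem_Ici.2 (hx₀.trans hs)) hs
      have h2 : (0:ℝ) ≤ f s ^ 2 := sq_nonneg _
      have : f s ^ 2 = 0 := by rw [hfx₀] at h1; nlinarith
      exact pow_eq_zero_iff (by norm_num) |>.mp this
    set x₁ := max x₀ 1 with hx₁
    refine ⟨(f 1 ^ 2 + 1) * Real.exp ((4/3) * x₁ ^ ((3:ℝ)/2)), by positivity, fun s hs => ?_⟩
    rcases le_total x₁ s with h|h
    · rw [hafter s ((le_max_left _ _).trans h)]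
      norm_num
      positivity
    · have hb1 : f s ^ 2 ≤ f 1 ^ 2 := hsq_anti (mem_Ici.2 zero_le_one)
        (mem_Ici.2 (zero_le_one.trans hs)) hs
      have hsx : s ^ ((3:ℝ)/2) ≤ x₁ ^ ((3:ℝ)/2) :=
        Real.rpow_le_rpow (zero_le_one.trans hs) h (by norm_num)
      have hexp : Real.exp ((4/3) * x₁ ^ ((3:ℝ)/2)) * Real.exp (-(4/3) * s ^ ((3:ℝ)/2)) ≥ 1 := by
        rw [← Real.exp_add]
        have : 0 ≤ (4/3) * x₁ ^ ((3:ℝ)/2) + -(4/3) * s ^ ((3:ℝ)/2) := by nlinarith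
        calc (1:ℝ) = Real.exp 0 := by simp
          _ ≤ _ := Real.exp_le_exp.2 this
      calc f s ^ 2 ≤ f 1 ^ 2 + 1 := by nlinarith
        _ = (f 1 ^ 2 + 1) * 1 := by ring
        _ ≤ (f 1 ^ 2 + 1) * (Real.exp ((4/3) * x₁ ^ ((3:ℝ)/2)) * Real.exp (-(4/3) * s ^ ((3:ℝ)/2))) := by
            nlinarith [sq_nonneg (f 1)]
        _ = (f 1 ^ 2 + 1) * Real.exp ((4/3) * x₁ ^ ((3:ℝ)/2)) * Real.exp (-(4/3) * s ^ ((3:ℝ)/2)) := by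
            ring
  · -- main case : f positive on [0,∞)
    push_neg at hzero
    have hf0 : 0 < f 0 := by
      rw [hval]
      have h1 : 0 < Real.Gamma (2/3) := Real.Gamma_pos_of_pos (by norm_num)
      positivity
    have hfpos : ∀ x, 0 ≤ x → 0 < f x := by
      intro x hx
      rcases lt_trichotomy (f x) 0 with h|h|h
      · exfalso
        have hIVT := intermediate_value_Icc' hx (hcf.continuousOn (s := Icc 0 x))
        have h0mem : (0:ℝ) ∈ Icc (f x) (f 0) := ⟨h.le, hf0.le⟩
        obtain ⟨c, hc, hfc⟩ := hIVT h0mem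
        exact hzero c hc.1 hfc
      · exact absurd h (hzero x hx)
      · exact h
    have hf'le : ∀ x, 0 ≤ x → deriv f x ≤ 0 := by
      intro x hx
      by_contra hgt
      push_neg at hgt
      have := hVle x hx
      simp only [hV] at this
      nlinarith [hfpos x hx]
    -- along a sequence, x f(x)² is small
    have hsmall : ∀ δ : ℝ, 0 < δ → ∀ R : ℝ, 1 ≤ R → ∃ x, R ≤ x ∧ x * f x ^ 2 < δ := by
      intro δ hδ R hR
      by_contra hcon
      push_neg at hcon
      have hsd : 0 < Real.sqrt δ := Real.sqrt_pos.2 hδ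
      have hfpp : ∀ x, R ≤ x → Real.sqrt δ ≤ x * f x := by
        intro x hx
        have h1 : δ ≤ x * f x ^ 2 := hcon x hx
        have hx0 : (0:ℝ) < x := lt_of_lt_of_le one_pos (hR.trans hx)
        have hfx : 0 < f x := hfpos x hx0.le
        have h2 : Real.sqrt δ ^ 2 ≤ (x * f x) ^ 2 := by nlinarith [Real.sq_sqrt hδ.le]
        have := Real.sqrt_le_sqrt h2
        rwa [Real.sqrt_sq hsd.le, Real.sqrt_sq (by positivity)] at this
      -- f' - √δ x is monotone on [R,∞)
      have hdh : ∀ x, HasDerivAt (fun x => deriv f x - Real.sqrt δ * x) (x * f x - Real.sqrt δ) x := by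
        intro x
        have h2 : HasDerivAt (fun x:ℝ => Real.sqrt δ * x) (Real.sqrt δ) x := by
          simpa using (hasDerivAt_id x).const_mul (Real.sqrt δ)
        exact (hdf' x).sub h2
      have hmono : MonotoneOn (fun x => deriv f x - Real.sqrt δ * x) (Ici R) := by
        apply monotoneOn_of_deriv_nonneg (convex_Ici R)
          ((hcf'.sub (continuous_const.mul continuous_id')).continuousOn)
          (fun x _ => ((hdh x).differentiableAt).differentiableWithinAt)
        intro x hx
        rw [interior_Ici] at hx
        rw [show (deriv f - (fun x => √δ) * fun x => x) = (fun x => deriv f x - √δ * x) from rfl, (hdh x).deriv]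
        have := hfpp x hx.out.le
        linarith
      have hfR : deriv f R ≤ 0 := hf'le R (zero_le_one.trans hR)
      obtain ⟨x, hxdef⟩ : ∃ x, x = R + (1 - deriv f R) / Real.sqrt δ := ⟨_, rfl⟩
      have hquot : 0 ≤ (1 - deriv f R) / Real.sqrt δ := div_nonneg (by linarith) hsd.le
      have hxR : R ≤ x := by rw [hxdef]; linarith
      have hmm := hmono self_mem_Ici (mem_Ici.2 hxR) hxR
      simp only at hmm
      have hcalc : Real.sqrt δ * x = Real.sqrt δ * R + (1 - deriv f R) := by
        rw [hxdef]; field_simp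
      have hfx' : deriv f x ≤ 0 := hf'le x ((zero_le_one.trans hR).trans hxR)
      linarith
    -- E = f'² - x f² is antitone and nonnegative on [0,∞)
    have hdE : ∀ x, HasDerivAt (fun x => deriv f x ^ 2 - x * f x ^ 2) (-(f x ^ 2)) x := by
      intro x
      have h1 : HasDerivAt (fun x => deriv f x ^ 2) (2 * deriv f x ^ 1 * (x * f x)) x :=
        (hdf' x).pow 2
      have h2 : HasDerivAt (fun x => x * f x ^ 2) (1 * f x ^ 2 + x * (2 * f x ^ 1 * deriv f x)) x :=
        (hasDerivAt_id x).mul ((hdf x).pow 2)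
      have h3 := h1.sub h2
      refine h3.congr_deriv ?_
      push_cast
      ring
    have hEanti : AntitoneOn (fun x => deriv f x ^ 2 - x * f x ^ 2) (Ici 0) := by
      apply antitoneOn_of_deriv_nonpos (convex_Ici 0)
        (((hcf'.pow 2).sub (continuous_id'.mul (hcf.pow 2))).continuousOn)
        (fun x _ => ((hdE x).differentiableAt).differentiableWithinAt)
      intro x hx
      rw [show (deriv f ^ 2 - (fun x => x) * f ^ 2) = (fun x => deriv f x ^ 2 - x * f x ^ 2) from rfl, (hdE x).deriv]
      nlinarith [sq_nonneg (f x)]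
    have hEnonneg : ∀ x, 0 ≤ x → 0 ≤ deriv f x ^ 2 - x * f x ^ 2 := by
      intro x₁ hx₁
      by_contra hneg
      push_neg at hneg
      set δ := -(deriv f x₁ ^ 2 - x₁ * f x₁ ^ 2) with hδdef
      have hδ : 0 < δ := by simp only [hδdef]; linarith
      obtain ⟨x, hx1, hx2⟩ := hsmall δ hδ (max x₁ 1) (le_max_right _ _)
      have hx₁x : x₁ ≤ x := (le_max_left x₁ 1).trans hx1
      have := hEanti (mem_Ici.2 hx₁) (mem_Ici.2 (hx₁.trans hx₁x)) hx₁x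
      simp only at this
      nlinarith [sq_nonneg (deriv f x)]
    -- hence f' ≤ -√x f on [1,∞)
    have hkey : ∀ x, 1 ≤ x → deriv f x + Real.sqrt x * f x ≤ 0 := by
      intro x hx
      have h0x : (0:ℝ) ≤ x := zero_le_one.trans hx
      have hE := hEnonneg x h0x
      have h1 : (Real.sqrt x * f x) ^ 2 ≤ (-(deriv f x)) ^ 2 := by
        have : Real.sqrt x ^ 2 = x := Real.sq_sqrt h0x
        nlinarith
      have h2 := Real.sqrt_le_sqrt h1
      rw [Real.sqrt_sq (mul_nonneg (Real.sqrt_nonneg x) (hfpos x h0x).le),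
        Real.sqrt_sq (by linarith [hf'le x h0x])] at h2
      linarith
    -- g = f * exp((2/3) x^{3/2}) is antitone on [1,∞)
    have hdg2 : ∀ x : ℝ, 0 < x → HasDerivAt (fun x => f x * Real.exp ((2/3) * x ^ ((3:ℝ)/2)))
        (deriv f x * Real.exp ((2/3) * x ^ ((3:ℝ)/2))
          + f x * (Real.exp ((2/3) * x ^ ((3:ℝ)/2)) * Real.sqrt x)) x := by
      intro x hx
      have hu : HasDerivAt (fun x:ℝ => (2/3) * x ^ ((3:ℝ)/2)) (Real.sqrt x) x := by
        have h1 := (Real.hasDerivAt_rpow_const (x := x) (p := (3:ℝ)/2) (Or.inl hx.ne'))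
        have h2 := h1.const_mul ((2:ℝ)/3)
        refine h2.congr_deriv ?_
        rw [Real.sqrt_eq_rpow]
        norm_num
        ring
      exact (hdf x).mul hu.exp
    have hganti : AntitoneOn (fun x => f x * Real.exp ((2/3) * x ^ ((3:ℝ)/2))) (Ici 1) := by
      apply antitoneOn_of_deriv_nonpos (convex_Ici 1)
        (fun x hx => ((hdg2 x (lt_of_lt_of_le one_pos hx)).continuousAt).continuousWithinAt)
      · intro x hx
        rw [interior_Ici] at hx
        exact ((hdg2 x (lt_trans one_pos hx)).differentiableAt).differentiableWithinAt
      · intro x hx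
        rw [interior_Ici] at hx
        rw [(hdg2 x (lt_trans one_pos hx)).deriv]
        have hk := hkey x hx.out.le
        nlinarith [mul_le_mul_of_nonneg_left hk (Real.exp_pos ((2/3) * x ^ ((3:ℝ)/2))).le]
    have hf1 : 0 < f 1 := hfpos 1 zero_le_one
    refine ⟨(f 1 * Real.exp (2/3))^2, pow_pos (mul_pos hf1 (Real.exp_pos _)) 2, fun s hs => ?_⟩
    have hu := hganti (self_mem_Ici) (mem_Ici.2 hs) hs
    simp only [Real.one_rpow, mul_one] at hu
    have hE : 0 < Real.exp ((2/3) * s ^ ((3:ℝ)/2)) := Real.exp_pos _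
    have hfs : 0 ≤ f s := (hfpos s (zero_le_one.trans hs)).le
    have hsq : (f s * Real.exp ((2/3) * s ^ ((3:ℝ)/2)))^2 ≤ (f 1 * Real.exp (2/3))^2 := by
      nlinarith [mul_nonneg hfs hE.le, mul_pos hf1 (Real.exp_pos (2/3:ℝ))]
    have hexpand : (f s * Real.exp ((2/3) * s ^ ((3:ℝ)/2)))^2
        = f s ^ 2 * Real.exp ((4/3) * s ^ ((3:ℝ)/2)) := by
      rw [mul_pow]
      congr 1
      rw [sq, ← Real.exp_add]
      congr 1
      ring
    rw [hexpand] at hsq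
    have hpos : 0 < Real.exp ((4/3) * s ^ ((3:ℝ)/2)) := Real.exp_pos _
    rw [show -(4/3) * s ^ ((3:ℝ)/2) = -((4/3) * s ^ ((3:ℝ)/2)) by ring, Real.exp_neg,
      ← div_eq_mul_inv, le_div_iff₀ hpos]
    exact hsq

end AiryAuxiliary

/-- Hilbert–Schmidt bound: with `ᾱ = max{0,α}`, there is `c > 0` (depending on `α`)
so that for all `m ≥ 1`,
`∫_m^∞ ∫_0^∞ Ai(y+λ+ᾱ)² e^{2(1+α)λ} dλ dy ≤ c e^{−(4/3)m^{3/2}}`. -/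
theorem hs_bound_second_factor (Ai : ℝ → ℝ) (hAi : IsAiryFn Ai) (α : ℝ) :
    ∃ c > (0 : ℝ), ∀ m : ℝ, 1 ≤ m →
      (∫ y in Set.Ioi m, ∫ l in Set.Ioi (0 : ℝ),
          Ai (y + l + max 0 α) ^ 2 * Real.exp (2 * (1 + α) * l)) ≤
        c * Real.exp (-(4 / 3) * m ^ ((3 : ℝ) / 2)) := by
  obtain ⟨C, hC, hdecay⟩ := airy_decay Ai hAi
  obtain ⟨c₀, hc₀, hdom⟩ := exp_dom (2 * (1 + α))
  refine ⟨C * Real.exp c₀, by positivity, fun m hm => ?_⟩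
  set a := 2 * (1 + α) with ha
  set β := max 0 α with hβdef
  have hβ : 0 ≤ β := le_max_left _ _
  have hexp1 : IntegrableOn (fun l : ℝ => Real.exp (-l)) (Ioi (0:ℝ)) := by
    simpa using exp_neg_integrableOn_Ioi (0:ℝ) one_pos
  -- pointwise bound on the inner integrand
  have hq : ∀ y : ℝ, 1 ≤ y → ∀ l : ℝ, 0 ≤ l →
      Ai (y + l + β) ^ 2 * Real.exp (a * l)
        ≤ C * Real.exp c₀ * Real.exp (-(4/3) * y ^ ((3:ℝ)/2)) * Real.exp (-l) := by
    intro y hy l hl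
    have h1 : 1 ≤ y + l + β := by linarith
    have hb := hdecay (y + l + β) h1
    have hs1 : y ^ ((3:ℝ)/2) + l ^ ((3:ℝ)/2) ≤ (y + l) ^ ((3:ℝ)/2) := superadd (by linarith) hl
    have hs2 : (y+l) ^ ((3:ℝ)/2) ≤ (y + l + β) ^ ((3:ℝ)/2) :=
      Real.rpow_le_rpow (by linarith) (by linarith) (by norm_num)
    have hmono : Real.exp (-(4/3) * (y+l+β) ^ ((3:ℝ)/2)) ≤
        Real.exp (-(4/3) * (y ^ ((3:ℝ)/2) + l ^ ((3:ℝ)/2))) :=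
      Real.exp_le_exp.2 (by nlinarith)
    have hstep : Ai (y + l + β) ^ 2 * Real.exp (a * l)
        ≤ C * Real.exp (-(4/3) * (y ^ ((3:ℝ)/2) + l ^ ((3:ℝ)/2))) * Real.exp (a * l) := by
      have h2 := hb.trans (mul_le_mul_of_nonneg_left hmono hC.le)
      exact mul_le_mul_of_nonneg_right h2 (Real.exp_pos _).le
    refine hstep.trans ?_
    have hee : ∀ u v : ℝ, Real.exp u * Real.exp v = Real.exp (u + v) := fun u v =>
      (Real.exp_add u v).symm
    calc C * Real.exp (-(4/3) * (y ^ ((3:ℝ)/2) + l ^ ((3:ℝ)/2))) * Real.exp (a * l)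
        = C * Real.exp (-(4/3) * (y ^ ((3:ℝ)/2) + l ^ ((3:ℝ)/2)) + a * l) := by
          rw [Real.exp_add]; ring
      _ ≤ C * Real.exp (c₀ + -(4/3) * y ^ ((3:ℝ)/2) + -l) := by
          apply mul_le_mul_of_nonneg_left _ hC.le
          apply Real.exp_le_exp.2
          have := hdom l hl
          nlinarith
      _ = C * Real.exp c₀ * Real.exp (-(4/3) * y ^ ((3:ℝ)/2)) * Real.exp (-l) := by
          rw [Real.exp_add, Real.exp_add]; ring
  -- bound on the inner integral
  have hF : ∀ y : ℝ, 1 ≤ y →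
      (∫ l in Set.Ioi (0:ℝ), Ai (y + l + β) ^ 2 * Real.exp (a * l))
        ≤ C * Real.exp c₀ * Real.exp (-(4/3) * y ^ ((3:ℝ)/2)) := by
    intro y hy
    have hint : Integrable (fun l : ℝ =>
        C * Real.exp c₀ * Real.exp (-(4/3) * y ^ ((3:ℝ)/2)) * Real.exp (-l))
        (volume.restrict (Ioi (0:ℝ))) := hexp1.const_mul _
    have hmono := integral_mono_of_nonneg
      (f := fun l : ℝ => Ai (y + l + β) ^ 2 * Real.exp (a * l))
      (g := fun l : ℝ => C * Real.exp c₀ * Real.exp (-(4/3) * y ^ ((3:ℝ)/2)) * Real.exp (-l))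
      (Eventually.of_forall fun l => by positivity) hint ?_
    · refine hmono.trans ?_
      rw [integral_const_mul, integral_exp_neg_Ioi_zero, mul_one]
    · filter_upwards [self_mem_ae_restrict measurableSet_Ioi] with l hl
      exact hq y hy l (le_of_lt hl)
  -- bound on the outer integral
  set K := C * Real.exp c₀ * Real.exp (-(4/3) * m ^ ((3:ℝ)/2)) * Real.exp m with hK
  have houter : ∀ y : ℝ, y ∈ Ioi m →
      (∫ l in Set.Ioi (0:ℝ), Ai (y + l + β) ^ 2 * Real.exp (a * l)) ≤ K * Real.exp (-y) := by
    intro y hy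
    have hmy : m ≤ y := le_of_lt hy
    have hy1 : 1 ≤ y := hm.trans hmy
    refine (hF y hy1).trans ?_
    have hll := lin_lower hm hmy
    have he : Real.exp (-(4/3) * y ^ ((3:ℝ)/2)) ≤
        Real.exp (-(4/3) * m ^ ((3:ℝ)/2)) * (Real.exp m * Real.exp (-y)) := by
      rw [← Real.exp_add, ← Real.exp_add]
      apply Real.exp_le_exp.2
      nlinarith
    calc C * Real.exp c₀ * Real.exp (-(4/3) * y ^ ((3:ℝ)/2))
        ≤ C * Real.exp c₀ * (Real.exp (-(4/3) * m ^ ((3:ℝ)/2)) * (Real.exp m * Real.exp (-y))) :=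
          mul_le_mul_of_nonneg_left he (by positivity)
      _ = K * Real.exp (-y) := by rw [hK]; ring
  have hKexp : IntegrableOn (fun y : ℝ => Real.exp (-y)) (Ioi m) := by
    simpa using exp_neg_integrableOn_Ioi m one_pos
  have hKint : Integrable (fun y : ℝ => K * Real.exp (-y)) (volume.restrict (Ioi m)) :=
    hKexp.const_mul _
  have hfinal := integral_mono_of_nonneg
    (f := fun y : ℝ => ∫ l in Set.Ioi (0:ℝ), Ai (y + l + β) ^ 2 * Real.exp (a * l))
    (g := fun y : ℝ => K * Real.exp (-y))
    (Eventually.of_forall fun y => integral_nonneg fun l => by positivity) hKint ?_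
  · refine hfinal.trans ?_
    rw [integral_const_mul, integral_exp_neg_Ioi, hK]
    rw [show C * Real.exp c₀ * Real.exp (-(4/3) * m ^ ((3:ℝ)/2)) * Real.exp m * Real.exp (-m)
        = C * Real.exp c₀ * Real.exp (-(4/3) * m ^ ((3:ℝ)/2)) * (Real.exp m * Real.exp (-m)) by ring,
      ← Real.exp_add]
    simp
  · filter_upwards [self_mem_ae_restrict measurableSet_Ioi] with y hy
    exact houter y hy
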